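/- Let M be a uniformly discrete, bounded metric space with a distinguished point 0, let (x_i, y_i)_{i=1}^n be pairs of distinct points of M, let λ_i > 0 with Σ_{i=1}^n λ_i = 1, and let f : M → ℝ be 1-Lipschitz with f(0) = 0 and f(x_i) − f(y_i) = d(x_i, y_i) for all i. Assume: (α) for every pair of distinct j, k ∈ {1,…,n} there is a finite sequence of pairwise distinct indices i_1, …, i_m ∈ {1,…,n} containing both j and k such that d(x_{i_1},y_{i_1}) + ⋯ + d(x_{i_m},y_{i_m}) = d(x_{i_1},y_{i_2}) + ⋯ + d(x_{i_m},y_{i_1}); and (β) for every x ∈ M there are distinct points s, t ∈ {x_1, y_1, …, x_n, y_n} with f(t) − f(s) = d(t,s) and d(s,x) + d(t,x) = d(s,t). Let X be a real normed space, x ∈ X with ‖x‖ = 1, and x* a continuous linear functional on X with ‖x*‖ = 1 and x*(x) = 1, such that every continuous linear functional v* with ‖v*‖ ≤ 1 and v*(x) = 1 equals x*. Then every map g from M to the dual X* with g(0) = 0, ‖g(p) − g(q)‖ ≤ d(p,q) for all p, q ∈ M, and Σ_{i=1}^n λ_i (g(x_i) − g(y_i))(x)/d(x_i, y_i) = 1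 satisfies g(p) = f(p)·x* for every p ∈ M. -/

import Mathlib

set_option maxHeartbeats 1000000


/-- Theorem 4.1(a) of the paper in dual form: if `μ = Σ λᵢ m_{xᵢ,yᵢ}` is a finitely supported
point of Fréchet differentiability of `ℱ(M)` with derivative `f` (conditions (α) and (β)) and
`v` is a point of Gâteaux differentiability of `X` with derivative `xs`, then the only norming
functional for `μ ⊗ v` in `Lip₀(M, X*) = (ℱ(M) ⊗̂_π X)*` is `f ⊗ xs`. -/
theorem stmt_14 {M : Type*} [MetricSpace M]
    (hud : ∃ θ : ℝ, 0 < θ ∧ ∀ p q : M, p ≠ q → θ ≤ dist p q)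
    (hbd : ∃ D : ℝ, ∀ p q : M, dist p q ≤ D)
    (z : M) (n : ℕ) (x y : Fin n → M) (hxy : ∀ i : Fin n, x i ≠ y i)
    (lam : Fin n → ℝ) (hlam : ∀ i, 0 < lam i) (hlam1 : ∑ i, lam i = 1)
    (f : M → ℝ) (hf : LipschitzWith 1 f) (hf0 : f z = 0)
    (hfi : ∀ i : Fin n, f (x i) - f (y i) = dist (x i) (y i))
    (halpha : ∀ j k : Fin n, j ≠ k →
      ∃ (m : ℕ) (i : ℕ → Fin n), 1 ≤ m ∧
        (∀ r < m, ∀ s < m, i r = i s → r = s) ∧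
        (∃ r < m, i r = j) ∧ (∃ r < m, i r = k) ∧
        ∑ r ∈ Finset.range m, dist (x (i r)) (y (i r)) =
          ∑ r ∈ Finset.range m, dist (x (i r)) (y (i ((r + 1) % m))))
    (hbeta : ∀ p : M, ∃ s t : M, s ≠ t ∧
      (∃ i : Fin n, s = x i ∨ s = y i) ∧ (∃ i : Fin n, t = x i ∨ t = y i) ∧
      f t - f s = dist t s ∧ dist s p + dist t p = dist s t)
    {X : Type*} [NormedAddCommGroup X] [NormedSpace ℝ X]
    (v : X) (hv : ‖v‖ = 1)
    (xs : X →L[ℝ] ℝ) (hxs : ‖xs‖ = 1) (hxsv : xs v = 1)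
    (huniq : ∀ vs : X →L[ℝ] ℝ, ‖vs‖ ≤ 1 → vs v = 1 → vs = xs) :
    ∀ g : M → (X →L[ℝ] ℝ), g z = 0 →
      (∀ p q : M, ‖g p - g q‖ ≤ dist p q) →
      (∑ i, lam i * ((g (x i) - g (y i)) v / dist (x i) (y i))) = 1 →
      ∀ p : M, g p = f p • xs := by
  intro g hgz hgLip hgsum
  -- real Lipschitz bounds
  have hfLip : ∀ a b : M, |f a - f b| ≤ dist a b := by
    intro a b
    have := hf.dist_le_mul a b
    simpa [Real.dist_eq] using this
  have hhLip : ∀ a b : M, |(g a - g b) v| ≤ dist a b := by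
    intro a b
    have h1 : ‖(g a - g b) v‖ ≤ ‖g a - g b‖ * ‖v‖ := (g a - g b).le_opNorm v
    rw [hv, mul_one] at h1
    exact (le_trans h1 (hgLip a b))
  -- Step 1: each term of the sum equals 1, i.e. (g xᵢ - g yᵢ) v = dist xᵢ yᵢ
  have hterm : ∀ i : Fin n, (g (x i) - g (y i)) v = dist (x i) (y i) := by
    intro i
    have hdpos : ∀ j : Fin n, 0 < dist (x j) (y j) := fun j => dist_pos.2 (hxy j)
    have htle : ∀ j : Fin n, (g (x j) - g (y j)) v / dist (x j) (y j) ≤ 1 := by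
      intro j
      rw [div_le_one (hdpos j)]
      exact le_trans (le_abs_self _) (hhLip (x j) (y j))
    have hsum0 : ∑ j, lam j * (1 - (g (x j) - g (y j)) v / dist (x j) (y j)) = 0 := by
      have : ∑ j, lam j * (1 - (g (x j) - g (y j)) v / dist (x j) (y j))
          = ∑ j, lam j - ∑ j, lam j * ((g (x j) - g (y j)) v / dist (x j) (y j)) := by
        rw [← Finset.sum_sub_distrib]
        apply Finset.sum_congr rfl
        intro j _
        ring
      rw [this, hlam1, hgsum, sub_self]
    have hnn : ∀ j ∈ Finset.univ, (0:ℝ) ≤ lam j * (1 - (g (x j) - g (y j)) v / dist (x j) (y j)) := by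
      intro j _
      exact mul_nonneg (hlam j).le (by linarith [htle j])
    have := (Finset.sum_eq_zero_iff_of_nonneg hnn).1 hsum0 i (Finset.mem_univ i)
    have h1 : (1 - (g (x i) - g (y i)) v / dist (x i) (y i)) = 0 := by
      rcases mul_eq_zero.1 this with h | h
      · exact absurd h (ne_of_gt (hlam i))
      · exact h
    have h2 : (g (x i) - g (y i)) v / dist (x i) (y i) = 1 := by linarith
    have h3 := (div_eq_iff (ne_of_gt (hdpos i))).1 h2
    rw [one_mul] at h3
    exact h3
  -- Step 2: norming pairs give multiples of xs
  have step2 : ∀ p q : M, (g p - g q) v = dist p q → g p - g q = dist p q • xs := by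
    intro p q hpq
    by_cases hpqe : p = q
    · subst hpqe; simp
    · have hd : 0 < dist p q := dist_pos.2 hpqe
      have hnorm : ‖(dist p q)⁻¹ • (g p - g q)‖ ≤ 1 := by
        refine le_trans (norm_smul_le ((dist p q)⁻¹) (g p - g q)) ?_
        rw [norm_inv, Real.norm_eq_abs, abs_of_pos hd, inv_mul_le_iff₀ hd, mul_one]
        exact hgLip p q
      have hval : ((dist p q)⁻¹ • (g p - g q)) v = 1 := by
        rw [ContinuousLinearMap.smul_apply, smul_eq_mul, hpq, inv_mul_cancel₀ (ne_of_gt hd)]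
      have hk := huniq _ hnorm hval
      have : g p - g q = dist p q • ((dist p q)⁻¹ • (g p - g q)) := by
        rw [smul_smul, mul_inv_cancel₀ (ne_of_gt hd), one_smul]
      rw [this, hk]
  -- Values of h = g · v on the molecules
  have hhi : ∀ i : Fin n, (g (x i) - g (y i)) v = dist (x i) (y i) := hterm
  -- Cycle lemma: any 1-Lipschitz φ attaining all dist (x i) (y i) attains the cross distances
  have cycle : ∀ (φ : M → ℝ), (∀ a b : M, |φ a - φ b| ≤ dist a b) →
      (∀ i : Fin n, φ (x i) - φ (y i) = dist (x i) (y i)) →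
      ∀ (m : ℕ) (idx : ℕ → Fin n), 1 ≤ m →
      (∑ r ∈ Finset.range m, dist (x (idx r)) (y (idx r)) =
        ∑ r ∈ Finset.range m, dist (x (idx r)) (y (idx ((r + 1) % m)))) →
      ∀ r < m, φ (x (idx r)) - φ (y (idx ((r + 1) % m)))
        = dist (x (idx r)) (y (idx ((r + 1) % m))) := by
    intro φ hφ hφi m idx hm hsum r hr
    have hmpos : 0 < m := hm
    have hbij : ∑ s ∈ Finset.range m, φ (y (idx ((s + 1) % m)))
        = ∑ s ∈ Finset.range m, φ (y (idx s)) := by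
      apply Finset.sum_nbij' (i := fun s => (s + 1) % m) (j := fun s => (s + (m - 1)) % m)
      · intro a _; exact Finset.mem_range.2 (Nat.mod_lt _ hmpos)
      · intro a _; exact Finset.mem_range.2 (Nat.mod_lt _ hmpos)
      · intro a ha
        have ha' := Finset.mem_range.1 ha
        rw [Nat.mod_add_mod]
        have : a + 1 + (m - 1) = a + m := by omega
        rw [this, Nat.add_mod_right, Nat.mod_eq_of_lt ha']
      · intro a ha
        have ha' := Finset.mem_range.1 ha
        rw [Nat.mod_add_mod]
        have : a + (m - 1) + 1 = a + m := by omega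
        rw [this, Nat.add_mod_right, Nat.mod_eq_of_lt ha']
      · intro a _; rfl
    have hzero : ∑ s ∈ Finset.range m,
        (dist (x (idx s)) (y (idx ((s + 1) % m)))
          - (φ (x (idx s)) - φ (y (idx ((s + 1) % m))))) = 0 := by
      rw [Finset.sum_sub_distrib, Finset.sum_sub_distrib, hbij, ← Finset.sum_sub_distrib]
      have : ∑ s ∈ Finset.range m, (φ (x (idx s)) - φ (y (idx s)))
          = ∑ s ∈ Finset.range m, dist (x (idx s)) (y (idx s)) :=
        Finset.sum_congr rfl (fun s _ => hφi (idx s))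
      rw [this, ← hsum, sub_self]
    have hnn : ∀ s ∈ Finset.range m, (0:ℝ) ≤
        dist (x (idx s)) (y (idx ((s + 1) % m)))
          - (φ (x (idx s)) - φ (y (idx ((s + 1) % m)))) := by
      intro s _
      have := le_trans (le_abs_self _) (hφ (x (idx s)) (y (idx ((s + 1) % m))))
      linarith
    have := (Finset.sum_eq_zero_iff_of_nonneg hnn).1 hzero r (Finset.mem_range.2 hr)
    linarith
  -- E-relation: g p - g q = (f p - f q) • xs ; transitivity and symmetry
  have Etrans : ∀ {p q r : M}, g p - g q = (f p - f q) • xs →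
      g q - g r = (f q - f r) • xs → g p - g r = (f p - f r) • xs := by
    intro p q r h1 h2
    have h3 : g p - g r = (g p - g q) + (g q - g r) := by abel
    rw [h3, h1, h2, ← add_smul]
    congr 1
    ring
  have Esymm : ∀ {p q : M}, g p - g q = (f p - f q) • xs →
      g q - g p = (f q - f p) • xs := by
    intro p q h1
    have h3 : g q - g p = -(g p - g q) := by abel
    rw [h3, h1]; refine (neg_smul _ _).symm.trans ?_
    congr 1
    ring
  -- edge: E (x i) (y i)
  have Exy : ∀ i : Fin n, g (x i) - g (y i) = (f (x i) - f (y i)) • xs := by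
    intro i
    rw [hfi i]
    exact step2 _ _ (hterm i)
  -- connectivity: E (y j) (y k) for all j k
  have Eyy : ∀ j k : Fin n, g (y j) - g (y k) = (f (y j) - f (y k)) • xs := by
    intro j k
    by_cases hjk : j = k
    · subst hjk; simp
    obtain ⟨m, idx, hm, _, ⟨rj, hrj, hij⟩, ⟨rk, hrk, hik⟩, hsum⟩ := halpha j k hjk
    have hmpos : 0 < m := hm
    -- cross edges for f and for g·v
    have hfc := cycle f hfLip hfi m idx hm hsum
    have hhc := cycle (fun p => g p v) (by
        intro a b
        have : g a v - g b v = (g a - g b) v := by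
          simp [ContinuousLinearMap.sub_apply]
        rw [this]; exact hhLip a b)
      (by
        intro i
        have : g (x i) v - g (y i) v = (g (x i) - g (y i)) v := by
          simp [ContinuousLinearMap.sub_apply]
        rw [this]; exact hterm i) m idx hm hsum
    have edge2 : ∀ r < m, g (x (idx r)) - g (y (idx ((r + 1) % m)))
        = (f (x (idx r)) - f (y (idx ((r + 1) % m)))) • xs := by
      intro r hr
      rw [hfc r hr]
      apply step2
      have := hhc r hr
      simpa [ContinuousLinearMap.sub_apply] using this
    have eyystep : ∀ r < m, g (y (idx r)) - g (y (idx ((r + 1) % m)))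
        = (f (y (idx r)) - f (y (idx ((r + 1) % m)))) • xs := by
      intro r hr
      exact Etrans (Esymm (Exy (idx r))) (edge2 r hr)
    have key : ∀ s : ℕ, g (y (idx 0)) - g (y (idx (s % m)))
        = (f (y (idx 0)) - f (y (idx (s % m)))) • xs := by
      intro s
      induction s with
      | zero => simp [Nat.zero_mod]
      | succ s ih =>
        have hstep := eyystep (s % m) (Nat.mod_lt _ hmpos)
        rw [Nat.mod_add_mod] at hstep
        exact Etrans ih hstep
    have hkeyj := key rj
    have hkeyk := key rk
    rw [Nat.mod_eq_of_lt hrj, hij] at hkeyj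
    rw [Nat.mod_eq_of_lt hrk, hik] at hkeyk
    exact Etrans (Esymm hkeyj) hkeyk
  -- E on the whole support
  have ES : ∀ p : M, (∃ i : Fin n, p = x i ∨ p = y i) →
      ∀ q : M, (∃ i : Fin n, q = x i ∨ q = y i) →
      g p - g q = (f p - f q) • xs := by
    have EyS : ∀ p : M, (∃ i : Fin n, p = x i ∨ p = y i) →
        ∀ k : Fin n, g p - g (y k) = (f p - f (y k)) • xs := by
      rintro p ⟨j, hp | hp⟩ k
      · subst hp; exact Etrans (Exy j) (Eyy j k)
      · subst hp; exact Eyy j k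
    rintro p hp q ⟨j, hq | hq⟩
    · subst hq
      exact Etrans (EyS p hp j) (Esymm (Etrans (Exy j) (by simp)))
    · subst hq; exact EyS p hp j
  -- squeeze lemma
  have squeeze : ∀ (φ : M → ℝ), (∀ a b : M, |φ a - φ b| ≤ dist a b) →
      ∀ s t p : M, φ t - φ s = dist t s → dist s p + dist t p = dist s t →
      (φ p - φ s = dist s p ∧ φ t - φ p = dist t p) := by
    intro φ hφ s t p h1 h2
    have a1 := abs_le.1 (hφ p s)
    have a2 := abs_le.1 (hφ t p)
    rw [dist_comm t s] at h1
    rw [dist_comm p s] at a1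
    constructor <;> linarith [a1.2, a2.2]
  -- anchor: find t in support with g t = f t • xs
  have anchor : ∃ t : M, (∃ i : Fin n, t = x i ∨ t = y i) ∧ g t = f t • xs := by
    obtain ⟨s, t, hst, hsS, htS, hft, hbtw⟩ := hbeta z
    have hE := ES t htS s hsS
    have hEv : g t v - g s v = f t - f s := by
      have : (g t - g s) v = (f t - f s) • xs v := by rw [hE]; rfl
      simpa [ContinuousLinearMap.sub_apply, smul_eq_mul, hxsv] using this
    have hht : g t v - g s v = dist t s := by rw [hEv, hft]
    have hsqh := squeeze (fun p => g p v) (by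
        intro a b
        have : g a v - g b v = (g a - g b) v := by simp [ContinuousLinearMap.sub_apply]
        rw [this]; exact hhLip a b) s t z hht hbtw
    have hsqf := squeeze f hfLip s t z hft hbtw
    refine ⟨t, htS, ?_⟩
    have hgt : (g t - g z) v = dist t z := by
      have hz : g z v = 0 := by rw [hgz]; rfl
      have := hsqh.2
      simp only [hgz] at this ⊢
      simp only [ContinuousLinearMap.sub_apply, ContinuousLinearMap.zero_apply, sub_zero]
      simpa [hz] using this
    have := step2 t z hgt
    rw [hgz, sub_zero] at this
    rw [this]
    congr 1
    have := hsqf.2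
    rw [hf0] at this
    linarith
  -- g = f • xs on the support
  obtain ⟨t0, ht0S, hgt0⟩ := anchor
  have gS : ∀ p : M, (∃ i : Fin n, p = x i ∨ p = y i) → g p = f p • xs := by
    intro p hp
    have hE := ES p hp t0 ht0S
    have : g p = (f p - f t0) • xs + g t0 := by rw [← hE]; abel
    rw [this, hgt0, ← add_smul]
    congr 1
    ring
  -- the general point
  intro p
  obtain ⟨s, t, hst, hsS, htS, hft, hbtw⟩ := hbeta p
  have hgs := gS s hsS
  have hgt := gS t htS
  have hht : g t v - g s v = dist t s := by
    rw [hgs, hgt]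
    simp only [ContinuousLinearMap.smul_apply, smul_eq_mul, hxsv, mul_one]
    exact hft
  have hsqh := squeeze (fun q => g q v) (by
      intro a b
      have : g a v - g b v = (g a - g b) v := by simp [ContinuousLinearMap.sub_apply]
      rw [this]; exact hhLip a b) s t p hht hbtw
  have hsqf := squeeze f hfLip s t p hft hbtw
  have hgtp : (g t - g p) v = dist t p := by
    have := hsqh.2
    simpa [ContinuousLinearMap.sub_apply] using this
  have hkey := step2 t p hgtp
  have : g p = g t - dist t p • xs := by rw [← hkey]; abel
  rw [this, hgt]; refine (sub_smul _ _ _).symm.trans ?_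
  congr 1
  have := hsqf.2
  linarith
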